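/- The no-tottering tree-pattern kernel K^{NT}(G_1,G_2) = Σ_{t∈T} w(t) ψ_t^{NT}(G_1) ψ_t^{NT}(G_2) satisfies K^{NT}(G_1,G_2) = Σ_{t∈T} w(t) ψ_t^{{V_{G_1}}}(G'_1) ψ_t^{{V_{G_2}}}(G'_2), where G'_i is the transformed graph of G_i and ψ_t^{{V_G}}(G') = Σ_{v∈V_G} ψ_t^{(v)}(G'). -/

import Mathlib

open scoped Classical

/-- A finite labeled directed graph: vertices `V`, edge relation `E`, vertex
labels `lv` and edge labels `le`, all labels taken in the alphabet `A`. -/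
structure LGraph (A : Type) where
  V : Type
  [fintypeV : Fintype V]
  [decEqV : DecidableEq V]
  E : V → V → Prop
  [decE : DecidableRel E]
  lv : V → A
  le : V → V → A

attribute [instance] LGraph.fintypeV LGraph.decEqV LGraph.decE

/-- A labeled rooted tree: a root label together with the list of children,
each child carrying the label of the edge connecting it to its parent and
the corresponding labeled subtree. -/
inductive LTree (A : Type) : Type where
  | node : A → List (A × LTree A) → LTree A

namespace LTree

variable {A : Type}

-- `size t` : number of nodes
mutual
def size : LTree A → ℕ
  | .node _ cs => 1 + sizeList cs
def sizeList : List (A × LTree A) → ℕ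
  | [] => 0
  | (_, t) :: rest => size t + sizeList rest
end

-- `depth t` : maximal number of edges from the root to a node, plus one
mutual
def depth : LTree A → ℕ
  | .node _ cs => 1 + depthList cs
def depthList : List (A × LTree A) → ℕ
  | [] => 0
  | (_, t) :: rest => max (depth t) (depthList rest)
end

-- `leaves t` : number of leaf nodes
mutual
def leaves : LTree A → ℕ
  | .node _ [] => 1
  | .node _ (c :: cs) => leavesList (c :: cs)
def leavesList : List (A × LTree A) → ℕ
  | [] => 0
  | (_, t) :: rest => leaves t + leavesList rest
end

/-- branching cardinality: number of leaves minus one -/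
def branch (t : LTree A) : ℕ := t.leaves - 1

-- `balanced t h` : `t` is perfectly depth-balanced of order `h` (every leaf at depth `h`)
mutual
def balanced : LTree A → ℕ → Prop
  | .node _ [], h => h = 1
  | .node _ (c :: cs), h => balancedList (c :: cs) (h - 1) ∧ 2 ≤ h
def balancedList : List (A × LTree A) → ℕ → Prop
  | [], _ => True
  | (_, t) :: rest, h => balanced t h ∧ balancedList rest h
end

end LTree

/-- A tree of graph vertices: the candidate images of the nodes of a tree
under a tree-pattern. -/
inductive VTree (V : Type) : Type where
  | node : V → List (VTree V) → VTree V

namespace VTree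

variable {V : Type}

/-- the vertex at the root -/
def root : VTree V → V
  | .node u _ => u

/-- the list of subtrees at the root -/
def children : VTree V → List (VTree V)
  | .node _ ps => ps

end VTree

/-- `isPattern G t p` : the decoration `p` of the tree `t` by vertices of `G` is a
tree-pattern of `G` with respect to `t`: node labels match, every tree edge is
realized by an edge of `G` with matching label, and sibling nodes are mapped to
distinct vertices. -/
def isPattern {A : Type} (G : LGraph A) : LTree A → VTree G.V → Prop
  | .node a cs, .node u ps =>
    G.lv u = a ∧ ps.length = cs.length ∧
    (∀ i j : Fin ps.length, i ≠ j → (ps.get i).root ≠ (ps.get j).root) ∧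
    ∀ i : Fin ps.length, ∀ (h : (i : ℕ) < cs.length),
      G.E u (ps.get i).root ∧ G.le u (ps.get i).root = (cs.get ⟨i, h⟩).1 ∧
      isPattern G (cs.get ⟨i, h⟩).2 (ps.get i)
termination_by _ p => sizeOf p
decreasing_by
  have h1 : sizeOf (ps.get i) < sizeOf ps := List.sizeOf_lt_of_mem (ps.get_mem i)
  simp only [VTree.node.sizeOf_spec]
  omega

/-- `psiRoot G t u` : number of tree-patterns of `G` with respect to `t` rooted at `u`. -/
noncomputable def psiRoot {A : Type} (G : LGraph A) (t : LTree A) (u : G.V) : ℕ :=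
  Set.ncard {p : VTree G.V | isPattern G t p ∧ p.root = u}

/-- `psi G t` : number of tree-patterns of `G` with respect to `t`. -/
noncomputable def psi {A : Type} (G : LGraph A) (t : LTree A) : ℕ :=
  Set.ncard {p : VTree G.V | isPattern G t p}

/-- The transformed graph `G'` of `G`: its vertices are the vertices and the edges
of `G`; there is an edge from `v` to `(v,t)` for every edge `(v,t)` of `G`, and an
edge from `(u,v)` to `(v,t)` for every pair of consecutive edges of `G` with `u ≠ t`.
A vertex `(u,v)` is labeled by `l(v)` and any edge pointing to `(v,t)` by `l((v,t))`. -/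
noncomputable def transform {A : Type} (G : LGraph A) : LGraph A where
  V := G.V ⊕ {p : G.V × G.V // G.E p.1 p.2}
  fintypeV :=
    have : Finite {p : G.V × G.V // G.E p.1 p.2} := Subtype.finite
    have : Fintype {p : G.V × G.V // G.E p.1 p.2} := Fintype.ofFinite _
    inferInstance
  decEqV := Classical.decEq _
  E := fun x y =>
    match x, y with
    | Sum.inl v, Sum.inr e => e.1.1 = v
    | Sum.inr e, Sum.inr e' => e'.1.1 = e.1.2 ∧ e.1.1 ≠ e'.1.2
    | _, _ => False
  decE := Classical.decRel _
  lv := fun x =>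
    match x with
    | Sum.inl v => G.lv v
    | Sum.inr e => G.lv e.1.2
  le := fun _ y =>
    match y with
    | Sum.inl v => G.lv v
    | Sum.inr e => G.le e.1.1 e.1.2

namespace VTree

variable {V : Type}

-- `noTot p` : the decorated tree (tree-pattern) `p` is no-tottering: no vertex
-- appears simultaneously as the parent and a child of a second vertex, i.e. for
-- every node, the vertex at this node differs from the vertices at its grandchildren
-- along each branch.
mutual
def noTot : VTree V → Prop
  | .node u ps => (∀ p ∈ ps, ∀ q ∈ p.children, u ≠ q.root) ∧ noTotList ps
def noTotList : List (VTree V) → Prop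
  | [] => True
  | p :: rest => noTot p ∧ noTotList rest
end

-- `rootLeafWalks p` : the list of vertex sequences of `p` along the paths from the
-- root to the leaves.
mutual
def rootLeafWalks : VTree V → List (List V)
  | .node u [] => [[u]]
  | .node u (p :: ps) => (rootLeafWalksList (p :: ps)).map (u :: ·)
def rootLeafWalksList : List (VTree V) → List (List V)
  | [] => []
  | p :: rest => rootLeafWalks p ++ rootLeafWalksList rest
end

end VTree

/-- a list of vertices is a walk of `G` -/
def isWalkList {A : Type} (G : LGraph A) (l : List G.V) : Prop :=
  ∀ i, (h : i + 1 < l.length) → G.E (l.get ⟨i, by omega⟩) (l.get ⟨i + 1, h⟩)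

/-- a list of vertices is no-tottering: entries two steps apart are distinct -/
def noTotList' {V : Type} (l : List V) : Prop :=
  ∀ i, (h : i + 2 < l.length) → l.get ⟨i, by omega⟩ ≠ l.get ⟨i + 2, h⟩

/-- `psiNT G t` : number of no-tottering tree-patterns of `G` with respect to `t`. -/
noncomputable def psiNT {A : Type} (G : LGraph A) (t : LTree A) : ℕ :=
  Set.ncard {p : VTree G.V | isPattern G t p ∧ p.noTot}
namespace VTree
variable {V W : Type}
def vmap (f : V → W) : VTree V → VTree W
  | .node u ps => .node (f u) (ps.attach.map fun x => vmap f x.1)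
termination_by p => sizeOf p
decreasing_by
  have := List.sizeOf_lt_of_mem x.2
  simp only [VTree.node.sizeOf_spec]; omega

@[simp] lemma vmap_node (f : V → W) (u : V) (ps : List (VTree V)) :
    vmap f (.node u ps) = .node (f u) (ps.map (vmap f)) := by
  rw [vmap]; congr 1; rw [List.attach_map_val]

@[simp] lemma root_vmap (f : V → W) (p : VTree V) : (vmap f p).root = f p.root := by
  cases p; simp [root]

@[simp] lemma root_node (u : V) (ps : List (VTree V)) : (VTree.node u ps).root = u := rfl
@[simp] lemma children_node (u : V) (ps : List (VTree V)) :
    (VTree.node u ps).children = ps := rfl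

lemma noTot_node (u : V) (ps : List (VTree V)) :
    (VTree.node u ps).noTot ↔
      (∀ p ∈ ps, ∀ q ∈ p.children, u ≠ q.root) ∧ noTotList ps := by
  rw [noTot]

lemma noTotList_iff : ∀ (l : List (VTree V)), noTotList l ↔ ∀ p ∈ l, p.noTot := by
  intro l; induction l with
  | nil => simp [noTotList]
  | cons p rest ih => rw [noTotList]; simp [ih]
end VTree

lemma isPattern_node {A : Type} (G : LGraph A) (a : A) (cs : List (A × LTree A))
    (u : G.V) (ps : List (VTree G.V)) :
  isPattern G (.node a cs) (.node u ps) ↔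
    (G.lv u = a ∧ ps.length = cs.length ∧
    (∀ i j : Fin ps.length, i ≠ j → (ps.get i).root ≠ (ps.get j).root) ∧
    ∀ i : Fin ps.length, ∀ (h : (i : ℕ) < cs.length),
      G.E u (ps.get i).root ∧ G.le u (ps.get i).root = (cs.get ⟨i, h⟩).1 ∧
      isPattern G (cs.get ⟨i, h⟩).2 (ps.get i)) := by rw [isPattern]

/-- Finiteness of the set of tree-patterns. -/
theorem pattern_finite {A : Type} (G : LGraph A) (t : LTree A) :
    {p : VTree G.V | isPattern G t p}.Finite := by
  obtain ⟨a, cs⟩ := t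
  have IH : ∀ i : Fin cs.length, {p : VTree G.V | isPattern G (cs.get i).2 p}.Finite := by
    intro i
    exact pattern_finite G (cs.get i).2
  set f : VTree G.V → G.V × (Fin cs.length → VTree G.V) :=
    fun p => (p.root, fun i => p.children.getD i (.node p.root [])) with hf
  have hsub : f '' {p : VTree G.V | isPattern G (.node a cs) p} ⊆
      (Set.univ : Set G.V) ×ˢ Set.pi Set.univ
        (fun i : Fin cs.length => {q : VTree G.V | isPattern G (cs.get i).2 q}) := by
    rintro x ⟨p, hp, rfl⟩
    obtain ⟨u, ps⟩ := p
    rw [Set.mem_setOf_eq, isPattern_node] at hp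
    obtain ⟨-, hlen, -, h4⟩ := hp
    constructor
    · exact Set.mem_univ _
    · intro i _
      have hi : (i : ℕ) < ps.length := by omega
      have : (VTree.node u ps).children.getD i (.node (VTree.node u ps).root []) =
          ps.get ⟨i, hi⟩ := by
        simp [VTree.children_node, List.getD_eq_getElem?_getD, List.getElem?_eq_getElem hi]
      simp only [hf, this]
      exact (h4 ⟨i, hi⟩ i.2).2.2
  have hinj : Set.InjOn f {p : VTree G.V | isPattern G (.node a cs) p} := by
    rintro ⟨u, ps⟩ hp ⟨u', ps'⟩ hp' heq
    rw [Set.mem_setOf_eq, isPattern_node] at hp hp'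
    simp only [hf, Prod.mk.injEq, VTree.root_node, VTree.children_node] at heq
    obtain ⟨h1, h2⟩ := heq
    subst h1
    congr 1
    apply List.ext_getElem (by omega)
    intro i hi hi'
    have hic : i < cs.length := by omega
    have := congrFun h2 ⟨i, hic⟩
    simpa [List.getD_eq_getElem?_getD, List.getElem?_eq_getElem hi,
      List.getElem?_eq_getElem hi'] using this
  have hpi : ((Set.univ : Set G.V) ×ˢ Set.pi Set.univ
        (fun i : Fin cs.length => {q : VTree G.V | isPattern G (cs.get i).2 q})).Finite :=
    (Set.finite_univ).prod (Set.Finite.pi (fun i => IH i))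
  exact Set.Finite.of_finite_image (hpi.subset hsub) hinj
termination_by sizeOf t
decreasing_by
  have h1 : sizeOf (cs.get i) < sizeOf cs := List.sizeOf_lt_of_mem (cs.get_mem i)
  have h2 : sizeOf (cs.get i).2 < sizeOf (cs.get i) := by
    obtain ⟨x, y⟩ := cs.get i; simp
  simp only [LTree.node.sizeOf_spec]; omega
section EncDec
variable {A : Type} (G : LGraph A)

/-- image of a non-root vertex in the transformed graph -/
noncomputable def mkV (parent u : G.V) : (transform G).V :=
  if h : G.E parent u then Sum.inr ⟨(parent, u), h⟩ else Sum.inl u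

lemma mkV_pos {parent u : G.V} (h : G.E parent u) :
    mkV G parent u = Sum.inr ⟨(parent, u), h⟩ := dif_pos h

/-- encoding of a (non-root) subtree of a pattern into the transformed graph -/
noncomputable def encAux (parent : G.V) : VTree G.V → VTree (transform G).V
  | .node u ps => .node (mkV G parent u) (ps.attach.map fun x => encAux u x.1)
termination_by p => sizeOf p
decreasing_by
  have := List.sizeOf_lt_of_mem x.2
  simp only [VTree.node.sizeOf_spec]; omega

lemma encAux_node (parent u : G.V) (ps : List (VTree G.V)) :
    encAux G parent (.node u ps) = .node (mkV G parent u) (ps.map (encAux G u)) := by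
  rw [encAux]; congr 1; rw [List.attach_map_val]

/-- encoding of a no-tottering pattern into the transformed graph -/
noncomputable def enc : VTree G.V → VTree (transform G).V
  | .node u ps => .node (Sum.inl u) (ps.map (encAux G u))

def proj : (transform G).V → G.V
  | Sum.inl v => v
  | Sum.inr e => e.1.2

@[simp] lemma proj_inl (v : G.V) : proj G (Sum.inl v) = v := rfl
@[simp] lemma proj_inr (e : {q : G.V × G.V // G.E q.1 q.2}) :
    proj G (Sum.inr e) = e.1.2 := rfl

noncomputable def dec : VTree (transform G).V → VTree G.V := VTree.vmap (proj G)

lemma dec_node (x : (transform G).V) (ps : List (VTree (transform G).V)) :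
    dec G (.node x ps) = .node (proj G x) (ps.map (dec G)) := by
  simp [dec]

@[simp] lemma proj_mkV (parent u : G.V) : proj G (mkV G parent u) = u := by
  unfold mkV; split_ifs with h <;> simp [h]

lemma dec_encAux : ∀ (p : VTree G.V) (parent : G.V), dec G (encAux G parent p) = p := by
  intro p
  induction p using VTree.vmap.induct with
  | _ u ps ih =>
    intro parent
    rw [encAux_node, dec_node]
    simp only [proj_mkV]
    congr 1
    rw [List.map_map]
    conv_rhs => rw [← List.map_id ps]
    apply List.map_congr_left
    intro q hq
    exact ih ⟨q, hq⟩ u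
end EncDec
section Transform
variable {A : Type} (G : LGraph A)

@[simp] lemma transform_lv_inl (v : G.V) : (transform G).lv (Sum.inl v) = G.lv v := rfl
@[simp] lemma transform_lv_inr (e : {q : G.V × G.V // G.E q.1 q.2}) :
    (transform G).lv (Sum.inr e) = G.lv e.1.2 := rfl
@[simp] lemma transform_le_inr (x : (transform G).V) (e : {q : G.V × G.V // G.E q.1 q.2}) :
    (transform G).le x (Sum.inr e) = G.le e.1.1 e.1.2 := rfl
@[simp] lemma transform_E_inl_inr (v : G.V) (e : {q : G.V × G.V // G.E q.1 q.2}) :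
    (transform G).E (Sum.inl v) (Sum.inr e) ↔ e.1.1 = v := by
  simp [transform]
@[simp] lemma transform_E_inr_inr (e e' : {q : G.V × G.V // G.E q.1 q.2}) :
    (transform G).E (Sum.inr e) (Sum.inr e') ↔ e'.1.1 = e.1.2 ∧ e.1.1 ≠ e'.1.2 := by
  simp [transform]
@[simp] lemma transform_E_inl_inl (v w : G.V) :
    ¬ (transform G).E (Sum.inl v) (Sum.inl w) := by simp [transform]
@[simp] lemma transform_E_inr_inl (e : {q : G.V × G.V // G.E q.1 q.2}) (w : G.V) :
    ¬ (transform G).E (Sum.inr e) (Sum.inl w) := by simp [transform]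

lemma encAux_root (parent : G.V) (p : VTree G.V) :
    (encAux G parent p).root = mkV G parent p.root := by
  obtain ⟨u, ps⟩ := p; rw [encAux_node]; rfl

theorem encAux_pattern : ∀ (p : VTree G.V) (t : LTree A) (parent : G.V),
    isPattern G t p → p.noTot → (∀ q ∈ p.children, parent ≠ q.root) →
    G.E parent p.root → isPattern (transform G) t (encAux G parent p) := by
  intro p
  induction p using VTree.vmap.induct with
  | _ u ps ih => ?_
  intro t parent hpat hnt hgc hE
  obtain ⟨a, cs⟩ := t
  rw [isPattern_node] at hpat
  obtain ⟨h1, h2, h3, h4⟩ := hpat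
  rw [VTree.noTot_node] at hnt
  have hroot : (VTree.node u ps).root = u := rfl
  rw [hroot] at hE
  erw [encAux_node, mkV_pos G hE, isPattern_node]
  have hlen : (ps.map (encAux G u)).length = ps.length := by simp
  have hget : ∀ i : Fin (ps.map (encAux G u)).length,
      (ps.map (encAux G u)).get i = encAux G u (ps.get ⟨i, by simpa using i.isLt⟩) := by
    intro i; simp
  have hEchild : ∀ i : Fin ps.length, G.E u (ps.get i).root := by
    intro i; exact (h4 i (by omega)).1
  have hgetroot : ∀ i : Fin (ps.map (encAux G u)).length,
      ((ps.map (encAux G u)).get i).root =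
        Sum.inr ⟨(u, (ps.get ⟨i, by simpa using i.isLt⟩).root), hEchild ⟨i, by simpa using i.isLt⟩⟩ := by
    intro i
    rw [hget i, encAux_root, mkV_pos G (hEchild ⟨i, by simpa using i.isLt⟩)]
  refine ⟨h1, by simp [h2], ?_, ?_⟩
  · intro i j hij
    rw [hgetroot i, hgetroot j]
    intro hcon
    apply h3 ⟨i, by simpa using i.isLt⟩ ⟨j, by simpa using j.isLt⟩ (by simpa [Fin.ext_iff] using hij)
    have := Sum.inr.inj hcon
    have := congrArg (fun e => e.1.2) this
    simpa using this
  · intro i hidx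
    have hi : (i : ℕ) < ps.length := by omega
    rw [hget i, encAux_root, mkV_pos G (hEchild ⟨i, hi⟩)]
    obtain ⟨hEi, hle, hpat'⟩ := h4 ⟨i, hi⟩ (by omega)
    refine ⟨?_, ?_, ?_⟩
    · rw [transform_E_inr_inr]
      exact ⟨rfl, hgc (ps.get ⟨i, hi⟩) (ps.get_mem _)⟩
    · exact hle
    · exact ih ⟨ps.get ⟨i, hi⟩, ps.get_mem _⟩ (cs.get ⟨i, hidx⟩).2 u hpat'
        ((VTree.noTotList_iff ps).1 hnt.2 _ (ps.get_mem _))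
        (hnt.1 (ps.get ⟨i, hi⟩) (ps.get_mem _)) hEi

theorem enc_pattern (t : LTree A) (p : VTree G.V) (hpat : isPattern G t p)
    (hnt : p.noTot) : isPattern (transform G) t (enc G p) := by
  obtain ⟨a, cs⟩ := t
  obtain ⟨u, ps⟩ := p
  rw [isPattern_node] at hpat
  obtain ⟨h1, h2, h3, h4⟩ := hpat
  rw [VTree.noTot_node] at hnt
  erw [enc, isPattern_node]
  have hget : ∀ i : Fin (ps.map (encAux G u)).length,
      (ps.map (encAux G u)).get i = encAux G u (ps.get ⟨i, by simpa using i.isLt⟩) := by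
    intro i; simp
  have hEchild : ∀ i : Fin ps.length, G.E u (ps.get i).root := by
    intro i; exact (h4 i (by omega)).1
  have hgetroot : ∀ i : Fin (ps.map (encAux G u)).length,
      ((ps.map (encAux G u)).get i).root =
        Sum.inr ⟨(u, (ps.get ⟨i, by simpa using i.isLt⟩).root), hEchild ⟨i, by simpa using i.isLt⟩⟩ := by
    intro i
    rw [hget i, encAux_root, mkV_pos G (hEchild ⟨i, by simpa using i.isLt⟩)]
  refine ⟨h1, by simp [h2], ?_, ?_⟩
  · intro i j hij
    rw [hgetroot i, hgetroot j]
    intro hcon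
    apply h3 ⟨i, by simpa using i.isLt⟩ ⟨j, by simpa using j.isLt⟩ (by simpa [Fin.ext_iff] using hij)
    have := Sum.inr.inj hcon
    have := congrArg (fun e => e.1.2) this
    simpa using this
  · intro i hidx
    have hi : (i : ℕ) < ps.length := by omega
    rw [hget i, encAux_root, mkV_pos G (hEchild ⟨i, hi⟩)]
    obtain ⟨hEi, hle, hpat'⟩ := h4 ⟨i, hi⟩ (by omega)
    refine ⟨by rw [transform_E_inl_inr], by exact hle, ?_⟩
    exact encAux_pattern G (ps.get ⟨i, hi⟩) (cs.get ⟨i, hidx⟩).2 u hpat'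
      ((VTree.noTotList_iff ps).1 hnt.2 _ (ps.get_mem _))
      (hnt.1 (ps.get ⟨i, hi⟩) (ps.get_mem _)) hEi

lemma enc_root (p : VTree G.V) : (enc G p).root = Sum.inl p.root := by
  obtain ⟨u, ps⟩ := p; rw [enc]; rfl

lemma dec_enc (p : VTree G.V) : dec G (enc G p) = p := by
  obtain ⟨u, ps⟩ := p
  erw [enc, dec_node]
  simp only [proj_inl]
  congr 1
  rw [List.map_map]
  conv_rhs => rw [← List.map_id ps]
  apply List.map_congr_left
  intro q hq
  exact dec_encAux G q u
end Transform
section Dec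
variable {A : Type} (G : LGraph A)

lemma transform_E_inr_elim {e : {q : G.V × G.V // G.E q.1 q.2}} {y : (transform G).V}
    (h : (transform G).E (Sum.inr e) y) :
    ∃ e', y = Sum.inr e' ∧ e'.1.1 = e.1.2 ∧ e.1.1 ≠ e'.1.2 := by
  cases y with
  | inl w => exact absurd h (transform_E_inr_inl G e w)
  | inr e' => exact ⟨e', rfl, (transform_E_inr_inr G e e').1 h⟩

lemma transform_E_inl_elim {v : G.V} {y : (transform G).V}
    (h : (transform G).E (Sum.inl v) y) :
    ∃ e', y = Sum.inr e' ∧ e'.1.1 = v := by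
  cases y with
  | inl w => exact absurd h (transform_E_inl_inl G v w)
  | inr e' => exact ⟨e', rfl, (transform_E_inl_inr G v e').1 h⟩

lemma dec_root (q : VTree (transform G).V) : (dec G q).root = proj G q.root := by
  simp [dec]

theorem decAux : ∀ (p' : VTree (transform G).V) (t : LTree A)
    (e : {q : G.V × G.V // G.E q.1 q.2}),
    isPattern (transform G) t p' → p'.root = Sum.inr e →
    isPattern G t (dec G p') ∧ (dec G p').noTot ∧
    (∀ q ∈ (dec G p').children, e.1.1 ≠ q.root) ∧
    encAux G e.1.1 (dec G p') = p' ∧ (dec G p').root = e.1.2 := by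
  intro p'
  induction p' using VTree.vmap.induct with
  | _ x ps' ih => ?_
  intro t e hpat hroot
  obtain ⟨a, cs⟩ := t
  have hx : x = Sum.inr e := hroot
  subst hx
  erw [isPattern_node] at hpat
  obtain ⟨h1, h2, h3, h4⟩ := hpat
  have hdec : dec G (.node (Sum.inr e) ps') = .node e.1.2 (ps'.map (dec G)) := by
    erw [dec_node]; rfl
  have key : ∀ i : Fin ps'.length, ∃ e', (ps'.get i).root = Sum.inr e' ∧
      e'.1.1 = e.1.2 ∧ e.1.1 ≠ e'.1.2 := by
    intro i
    have hE := (h4 i (by omega)).1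
    obtain ⟨e', hy, h5, h6⟩ := transform_E_inr_elim G hE
    exact ⟨e', hy, h5, h6⟩
  choose f hf1 hf2 hf3 using key
  have IHi : ∀ i : Fin ps'.length,
      isPattern G (cs.get ⟨i, by omega⟩).2 (dec G (ps'.get i)) ∧
      (dec G (ps'.get i)).noTot ∧
      (∀ q ∈ (dec G (ps'.get i)).children, (f i).1.1 ≠ q.root) ∧
      encAux G (f i).1.1 (dec G (ps'.get i)) = ps'.get i ∧
      (dec G (ps'.get i)).root = (f i).1.2 := by
    intro i
    exact ih ⟨ps'.get i, ps'.get_mem _⟩ (cs.get ⟨i, by omega⟩).2 (f i)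
      (h4 i (by omega)).2.2 (hf1 i)
  have hgetD : ∀ i : Fin (ps'.map (dec G)).length,
      (ps'.map (dec G)).get i = dec G (ps'.get ⟨i, by simpa using i.isLt⟩) := by
    intro i; simp
  have hrootD : ∀ i : Fin (ps'.map (dec G)).length,
      ((ps'.map (dec G)).get i).root = (f ⟨i, by simpa using i.isLt⟩).1.2 := by
    intro i; rw [hgetD i]
    exact (IHi ⟨i, by simpa using i.isLt⟩).2.2.2.2
  rw [hdec]
  have hmemIdx : ∀ q ∈ ps'.map (dec G), ∃ i : Fin ps'.length, q = dec G (ps'.get i) := by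
    intro q hq
    rw [List.mem_map] at hq
    obtain ⟨q0, hq0, rfl⟩ := hq
    obtain ⟨i, hi⟩ := List.mem_iff_get.1 hq0
    exact ⟨i, by rw [hi]⟩
  refine ⟨?_, ?_, ?_, ?_, rfl⟩
  · rw [isPattern_node]
    refine ⟨h1, by simp [h2], ?_, ?_⟩
    · intro i j hij hcon
      rw [hrootD i, hrootD j] at hcon
      apply h3 ⟨i, by simpa using i.isLt⟩ ⟨j, by simpa using j.isLt⟩
        (by simpa [Fin.ext_iff] using hij)
      rw [hf1, hf1]
      congr 1
      apply Subtype.ext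
      apply Prod.ext
      · rw [hf2, hf2]
      · exact hcon
    · intro i hidx
      have hi : (i : ℕ) < ps'.length := by simpa using i.isLt
      rw [hrootD i, hgetD i]
      refine ⟨?_, ?_, ?_⟩
      · rw [← hf2 ⟨i, hi⟩]; exact (f ⟨i, hi⟩).2
      · have hle := (h4 ⟨i, hi⟩ (by omega)).2.1
        rw [hf1] at hle
        erw [transform_le_inr] at hle
        rw [← hf2 ⟨i, hi⟩]
        exact hle
      · exact (IHi ⟨i, hi⟩).1
  · rw [VTree.noTot_node]
    constructor
    · intro q hq r hr
      obtain ⟨i, rfl⟩ := hmemIdx q hq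
      have := (IHi i).2.2.1 r hr
      rwa [hf2] at this
    · rw [VTree.noTotList_iff]
      intro q hq
      obtain ⟨i, rfl⟩ := hmemIdx q hq
      exact (IHi i).2.1
  · intro q hq
    obtain ⟨i, rfl⟩ := hmemIdx q hq
    rw [(IHi i).2.2.2.2]
    exact hf3 i
  · have hEe : G.E e.1.1 e.1.2 := e.2
    rw [encAux_node, mkV_pos G hEe]
    have he : (⟨(e.1.1, e.1.2), hEe⟩ : {q : G.V × G.V // G.E q.1 q.2}) = e :=
      Subtype.ext rfl
    rw [he]
    congr 1
    · rw [List.map_map]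
      conv_rhs => rw [← List.map_id ps']
      apply List.map_congr_left
      intro q hq
      obtain ⟨i, hi⟩ := List.mem_iff_get.1 hq
      subst hi
      have := (IHi i).2.2.2.1
      rw [hf2] at this
      simpa using this
end Dec
section Count
variable {A : Type} (G : LGraph A)

theorem dec_top (t : LTree A) (p' : VTree (transform G).V) (v : G.V)
    (hpat : isPattern (transform G) t p') (hroot : p'.root = Sum.inl v) :
    isPattern G t (dec G p') ∧ (dec G p').noTot ∧ enc G (dec G p') = p' ∧
    (dec G p').root = v := by
  obtain ⟨a, cs⟩ := t
  obtain ⟨x, ps'⟩ := p'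
  have hx : x = Sum.inl v := hroot
  subst hx
  erw [isPattern_node] at hpat
  obtain ⟨h1, h2, h3, h4⟩ := hpat
  have hdec : dec G (.node (Sum.inl v) ps') = .node v (ps'.map (dec G)) := by
    erw [dec_node]; rfl
  have key : ∀ i : Fin ps'.length, ∃ e', (ps'.get i).root = Sum.inr e' ∧
      e'.1.1 = v := by
    intro i
    have hE := (h4 i (by omega)).1
    exact transform_E_inl_elim G hE
  choose f hf1 hf2 using key
  have IHi : ∀ i : Fin ps'.length,
      isPattern G (cs.get ⟨i, by omega⟩).2 (dec G (ps'.get i)) ∧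
      (dec G (ps'.get i)).noTot ∧
      (∀ q ∈ (dec G (ps'.get i)).children, (f i).1.1 ≠ q.root) ∧
      encAux G (f i).1.1 (dec G (ps'.get i)) = ps'.get i ∧
      (dec G (ps'.get i)).root = (f i).1.2 := by
    intro i
    exact decAux G (ps'.get i) (cs.get ⟨i, by omega⟩).2 (f i)
      (h4 i (by omega)).2.2 (hf1 i)
  have hgetD : ∀ i : Fin (ps'.map (dec G)).length,
      (ps'.map (dec G)).get i = dec G (ps'.get ⟨i, by simpa using i.isLt⟩) := by
    intro i; simp
  have hrootD : ∀ i : Fin (ps'.map (dec G)).length,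
      ((ps'.map (dec G)).get i).root = (f ⟨i, by simpa using i.isLt⟩).1.2 := by
    intro i; rw [hgetD i]
    exact (IHi ⟨i, by simpa using i.isLt⟩).2.2.2.2
  have hmemIdx : ∀ q ∈ ps'.map (dec G), ∃ i : Fin ps'.length, q = dec G (ps'.get i) := by
    intro q hq
    rw [List.mem_map] at hq
    obtain ⟨q0, hq0, rfl⟩ := hq
    obtain ⟨i, hi⟩ := List.mem_iff_get.1 hq0
    exact ⟨i, by rw [hi]⟩
  rw [hdec]
  refine ⟨?_, ?_, ?_, rfl⟩
  · rw [isPattern_node]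
    refine ⟨h1, by simp [h2], ?_, ?_⟩
    · intro i j hij hcon
      rw [hrootD i, hrootD j] at hcon
      apply h3 ⟨i, by simpa using i.isLt⟩ ⟨j, by simpa using j.isLt⟩
        (by simpa [Fin.ext_iff] using hij)
      rw [hf1, hf1]
      congr 1
      apply Subtype.ext
      apply Prod.ext
      · rw [hf2, hf2]
      · exact hcon
    · intro i hidx
      have hi : (i : ℕ) < ps'.length := by simpa using i.isLt
      rw [hrootD i, hgetD i]
      refine ⟨?_, ?_, ?_⟩
      · rw [← hf2 ⟨i, hi⟩]; exact (f ⟨i, hi⟩).2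
      · have hle := (h4 ⟨i, hi⟩ (by omega)).2.1
        rw [hf1] at hle
        erw [transform_le_inr] at hle
        rw [← hf2 ⟨i, hi⟩]
        exact hle
      · exact (IHi ⟨i, hi⟩).1
  · rw [VTree.noTot_node]
    constructor
    · intro q hq r hr
      obtain ⟨i, rfl⟩ := hmemIdx q hq
      have := (IHi i).2.2.1 r hr
      rwa [hf2] at this
    · rw [VTree.noTotList_iff]
      intro q hq
      obtain ⟨i, rfl⟩ := hmemIdx q hq
      exact (IHi i).2.1
  · rw [enc]
    congr 1
    rw [List.map_map]
    conv_rhs => rw [← List.map_id ps']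
    apply List.map_congr_left
    intro q hq
    obtain ⟨i, hi⟩ := List.mem_iff_get.1 hq
    subst hi
    have := (IHi i).2.2.2.1
    rw [hf2] at this
    simpa using this

theorem key_count (t : LTree A) :
    psiNT G t = ∑ v : G.V, psiRoot (transform G) t (Sum.inl v) := by
  have hinj : Function.Injective (enc G) :=
    Function.LeftInverse.injective (dec_enc G)
  have himg : ∀ v : G.V,
      {p' : VTree (transform G).V | isPattern (transform G) t p' ∧ p'.root = Sum.inl v} =
        enc G '' {p : VTree G.V | isPattern G t p ∧ p.noTot ∧ p.root = v} := by
    intro v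
    ext p'
    constructor
    · rintro ⟨hp, hr⟩
      obtain ⟨hp1, hp2, hp3, hp4⟩ := dec_top G t p' v hp hr
      exact ⟨dec G p', ⟨hp1, hp2, hp4⟩, hp3⟩
    · rintro ⟨p, ⟨hp, hnt, hr⟩, rfl⟩
      exact ⟨enc_pattern G t p hp hnt, by rw [enc_root, hr]⟩
  have hroot : ∀ v : G.V, psiRoot (transform G) t (Sum.inl v) =
      {p : VTree G.V | isPattern G t p ∧ p.noTot ∧ p.root = v}.ncard := by
    intro v
    erw [psiRoot, himg v, Set.ncard_image_of_injective _ hinj]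
  have hfin : {p : VTree G.V | isPattern G t p ∧ p.noTot}.Finite :=
    (pattern_finite G t).subset (fun p hp => hp.1)
  have h1 : psiNT G t = hfin.toFinset.card := by
    rw [psiNT, Set.ncard_eq_toFinset_card _ hfin]
  have h2 : hfin.toFinset.card =
      ∑ v : G.V, (hfin.toFinset.filter fun p => p.root = v).card :=
    Finset.card_eq_sum_card_fiberwise (fun x _ => Finset.mem_univ x.root)
  rw [h1, h2]
  apply Finset.sum_congr rfl
  intro v _
  rw [hroot v, ← Set.ncard_coe_finset]
  congr 1
  ext p
  simp only [Finset.coe_filter, Set.Finite.mem_toFinset, Set.mem_setOf_eq]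
  tauto
end Count

/-- The no-tottering tree-pattern kernel
`K^{NT}(G1,G2) = Σ_{t∈T} w(t) ψ_t^{NT}(G1) ψ_t^{NT}(G2)` can be computed on the
transformed graphs: it equals `Σ_{t∈T} w(t) ψ_t^{V_{G1}}(G'_1) ψ_t^{V_{G2}}(G'_2)`,
where `ψ_t^{V_G}(G') = Σ_{v∈V_G} ψ_t^{(v)}(G')` counts the tree-patterns of the
transformed graph rooted in the copy of `V_G`. -/
theorem stmt_18 {A : Type} (S : Set (LTree A)) (w : LTree A → ℝ)
    (G1 G2 : LGraph A) :
    (∑ᶠ t ∈ S, w t * (psiNT G1 t : ℝ) * (psiNT G2 t : ℝ)) =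
      ∑ᶠ t ∈ S, w t *
        (∑ v : G1.V, (psiRoot (transform G1) t (Sum.inl v) : ℝ)) *
        (∑ v : G2.V, (psiRoot (transform G2) t (Sum.inl v) : ℝ)) := by
  apply finsum_mem_congr rfl
  intro t _
  rw [key_count G1 t, key_count G2 t, Nat.cast_sum, Nat.cast_sum]
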